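/- For d ≥ 1, t > 0 and ξ ∈ ℝ^d, the Fourier transform of the Cauchy kernel equals e^{-t‖ξ‖}: ∫_{ℝ^d} e^{i⟨ξ,x⟩} (Γ((d+1)/2)/π^{(d+1)/2}) · t/(t² + ‖x‖²)^{(d+1)/2} dx = e^{-t‖ξ‖}. -/

import Mathlib

open Real MeasureTheory

open Set


/-- Substitution `u ↦ c / u` on `Ioi 0`. -/
lemma sub_div_aux (c : ℝ) (hc : 0 < c) (g : ℝ → ℝ) :
    ∫ u in Ioi (0:ℝ), g u = ∫ u in Ioi (0:ℝ), (c / u ^ 2) * g (c / u) := by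
  have himg : (fun u => c / u) '' Ioi (0:ℝ) = Ioi 0 := by
    ext y
    constructor
    · rintro ⟨u, hu, rfl⟩; exact div_pos hc hu
    · intro hy; exact ⟨c / y, div_pos hc hy, by field_simp⟩
  have hderiv : ∀ u ∈ Ioi (0:ℝ), HasDerivWithinAt (fun u => c / u) (-(c / u ^ 2)) (Ioi 0) u := by
    intro u hu
    have : HasDerivAt (fun u : ℝ => c / u) (-(c / u ^ 2)) u := by
      simpa [div_eq_mul_inv, mul_comm] using (hasDerivAt_inv (ne_of_gt hu)).const_mul c
    exact this.hasDerivWithinAt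
  have hinj : InjOn (fun u => c / u) (Ioi 0) := by
    intro a ha b hb h
    simp only [div_eq_div_iff (ne_of_gt (show (0:ℝ) < a from ha)) (ne_of_gt (show (0:ℝ) < b from hb))] at h
    exact (mul_left_cancel₀ (ne_of_gt hc) h).symm
  calc ∫ u in Ioi (0:ℝ), g u = ∫ u in (fun u => c / u) '' Ioi 0, g u := by rw [himg]
    _ = ∫ u in Ioi (0:ℝ), |(-(c / u ^ 2))| • g (c / u) :=
        integral_image_eq_integral_abs_deriv_smul measurableSet_Ioi hderiv hinj g
    _ = ∫ u in Ioi (0:ℝ), (c / u ^ 2) * g (c / u) := by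
        refine setIntegral_congr_fun measurableSet_Ioi fun u hu => ?_
        rw [abs_neg, abs_of_nonneg (by positivity), smul_eq_mul]

lemma sub_div_aux_int (c : ℝ) (hc : 0 < c) (g : ℝ → ℝ) :
    IntegrableOn g (Ioi (0:ℝ)) ↔
      IntegrableOn (fun u => (c / u ^ 2) * g (c / u)) (Ioi (0:ℝ)) := by
  have himg : (fun u => c / u) '' Ioi (0:ℝ) = Ioi 0 := by
    ext y
    constructor
    · rintro ⟨u, hu, rfl⟩; exact div_pos hc hu
    · intro hy; exact ⟨c / y, div_pos hc hy, by field_simp⟩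
  have hderiv : ∀ u ∈ Ioi (0:ℝ), HasDerivWithinAt (fun u => c / u) (-(c / u ^ 2)) (Ioi 0) u := by
    intro u hu
    have : HasDerivAt (fun u : ℝ => c / u) (-(c / u ^ 2)) u := by
      simpa [div_eq_mul_inv, mul_comm] using (hasDerivAt_inv (ne_of_gt hu)).const_mul c
    exact this.hasDerivWithinAt
  have hinj : InjOn (fun u => c / u) (Ioi 0) := by
    intro a ha b hb h
    simp only [div_eq_div_iff (ne_of_gt (show (0:ℝ) < a from ha)) (ne_of_gt (show (0:ℝ) < b from hb))] at h
    exact (mul_left_cancel₀ (ne_of_gt hc) h).symm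
  have := integrableOn_image_iff_integrableOn_abs_deriv_smul measurableSet_Ioi hderiv hinj g
  rw [himg] at this
  rw [this]
  apply integrableOn_congr_fun _ measurableSet_Ioi
  intro u hu
  simp only [abs_neg, abs_of_nonneg (show (0:ℝ) ≤ c / u ^ 2 by positivity), smul_eq_mul]

lemma gamma_type (ν c : ℝ) (hν : 0 < ν) (hc : 0 < c) :
    (∫ s in Ioi (0:ℝ), s ^ (-ν - 1) * exp (-c / s)) = Real.Gamma ν / c ^ ν := by
  have key : ∀ u ∈ Ioi (0:ℝ),
      (c / u ^ 2) * ((c / u) ^ (-ν - 1) * exp (-c / (c / u)))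
        = c ^ (-ν) * (exp (-u) * u ^ (ν - 1)) := by
    intro u hu
    have hu0 : (0:ℝ) < u := hu
    have h1 : -c / (c / u) = -u := by field_simp
    have h2 : (c / u) ^ (-ν - 1) = c ^ (-ν - 1) * u ^ (-(-ν - 1)) := by
      rw [div_rpow hc.le hu0.le, div_eq_mul_inv, ← rpow_neg hu0.le]
    rw [h1, h2]
    have h3 : c / u ^ 2 = c ^ (1:ℝ) * u ^ (-2:ℝ) := by
      rw [rpow_one, show (-2:ℝ) = -((2:ℕ):ℝ) by norm_num, rpow_neg hu0.le, rpow_natCast,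
        div_eq_mul_inv]
    rw [h3]
    rw [show c ^ (1:ℝ) * u ^ (-2:ℝ) * (c ^ (-ν - 1) * u ^ (-(-ν - 1)) * exp (-u))
        = (c ^ (1:ℝ) * c ^ (-ν - 1)) * (exp (-u) * (u ^ (-2:ℝ) * u ^ (-(-ν - 1)))) by ring]
    rw [← rpow_add hc, ← rpow_add hu0,
      show (1:ℝ) + (-ν - 1) = -ν by ring, show (-2:ℝ) + -(-ν - 1) = ν - 1 by ring]
  rw [sub_div_aux c hc]
  rw [setIntegral_congr_fun measurableSet_Ioi key, integral_const_mul,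
    ← Real.Gamma_eq_integral hν, rpow_neg hc.le, div_eq_mul_inv, mul_comm]

lemma gamma_type_int (ν c : ℝ) (hν : 0 < ν) (hc : 0 < c) :
    IntegrableOn (fun s => s ^ (-ν - 1) * exp (-c / s)) (Ioi (0:ℝ)) := by
  have key : ∀ u ∈ Ioi (0:ℝ),
      (c / u ^ 2) * ((c / u) ^ (-ν - 1) * exp (-c / (c / u)))
        = c ^ (-ν) * (exp (-u) * u ^ (ν - 1)) := by
    intro u hu
    have hu0 : (0:ℝ) < u := hu
    have h1 : -c / (c / u) = -u := by field_simp
    have h2 : (c / u) ^ (-ν - 1) = c ^ (-ν - 1) * u ^ (-(-ν - 1)) := by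
      rw [div_rpow hc.le hu0.le, div_eq_mul_inv, ← rpow_neg hu0.le]
    rw [h1, h2]
    have h3 : c / u ^ 2 = c ^ (1:ℝ) * u ^ (-2:ℝ) := by
      rw [rpow_one, show (-2:ℝ) = -((2:ℕ):ℝ) by norm_num, rpow_neg hu0.le, rpow_natCast,
        div_eq_mul_inv]
    rw [h3]
    rw [show c ^ (1:ℝ) * u ^ (-2:ℝ) * (c ^ (-ν - 1) * u ^ (-(-ν - 1)) * exp (-u))
        = (c ^ (1:ℝ) * c ^ (-ν - 1)) * (exp (-u) * (u ^ (-2:ℝ) * u ^ (-(-ν - 1)))) by ring]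
    rw [← rpow_add hc, ← rpow_add hu0,
      show (1:ℝ) + (-ν - 1) = -ν by ring, show (-2:ℝ) + -(-ν - 1) = ν - 1 by ring]
  rw [sub_div_aux_int c hc]
  refine (IntegrableOn.congr_fun ?_ (fun u hu => (key u hu).symm) measurableSet_Ioi)
  exact (Real.GammaIntegral_convergent hν).const_mul _

section Glasser
variable (p q : ℝ)

lemma phi_image (hp : 0 < p) (hq : 0 < q) :
    (fun u => q * u - p / u) '' Ioi (0:ℝ) = univ := by
  apply eq_univ_of_forall
  intro y
  set D := Real.sqrt (y ^ 2 + 4 * q * p) with hD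
  have hD2 : D ^ 2 = y ^ 2 + 4 * q * p := Real.sq_sqrt (by positivity)
  have hDy : -y < D := by
    have h1 : Real.sqrt (y ^ 2) < D := Real.sqrt_lt_sqrt (sq_nonneg y) (by nlinarith)
    rw [Real.sqrt_sq_eq_abs] at h1
    calc -y ≤ |y| := neg_le_abs y
      _ < D := h1
  have hyD : (0:ℝ) < y + D := by linarith
  have hu : 0 < (y + D) / (2 * q) := div_pos hyD (by positivity)
  refine ⟨(y + D) / (2 * q), hu, ?_⟩
  have h2q : (2 * q) ≠ 0 := by positivity
  field_simp [ne_of_gt hyD]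
  nlinarith [hD2]

lemma phi_deriv (hp : 0 < p) (hq : 0 < q) : ∀ u ∈ Ioi (0:ℝ),
    HasDerivWithinAt (fun u => q * u - p / u) (q + p / u ^ 2) (Ioi 0) u := by
  intro u hu
  have hu0 : (0:ℝ) < u := hu
  have h : HasDerivAt (fun u : ℝ => q * u - p / u) (q + p / u ^ 2) u := by
    have h1 : HasDerivAt (fun u : ℝ => q * u) q u := by
      simpa using (hasDerivAt_id u).const_mul q
    have h2 : HasDerivAt (fun u : ℝ => p / u) (-(p / u ^ 2)) u := by
      simpa [div_eq_mul_inv, mul_comm] using (hasDerivAt_inv (ne_of_gt hu0)).const_mul p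
    simpa [sub_neg_eq_add, Pi.sub_def] using h1.sub h2
  exact h.hasDerivWithinAt

lemma phi_inj (hp : 0 < p) (hq : 0 < q) :
    InjOn (fun u => q * u - p / u) (Ioi (0:ℝ)) := by
  have : StrictMonoOn (fun u => q * u - p / u) (Ioi (0:ℝ)) := by
    intro a ha b hb hab
    have ha0 : (0:ℝ) < a := ha
    have hb0 : (0:ℝ) < b := hb
    have h1 : q * a < q * b := by gcongr
    have h2 : p / b < p / a := by gcongr
    simp only
    linarith
  exact this.injOn

lemma glasser_sum (hp : 0 < p) (hq : 0 < q) :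
    ∫ u in Ioi (0:ℝ), (q + p / u ^ 2) * exp (-(q * u - p / u) ^ 2) = Real.sqrt π := by
  have key := integral_image_eq_integral_abs_deriv_smul measurableSet_Ioi
    (phi_deriv p q hp hq) (phi_inj p q hp hq) (fun v => exp (-v ^ 2))
  rw [phi_image p q hp hq] at key
  have hg : ∫ v in (univ : Set ℝ), exp (-v ^ 2) = Real.sqrt π := by
    rw [setIntegral_univ]
    simpa using integral_gaussian 1
  rw [← hg, key]
  refine setIntegral_congr_fun measurableSet_Ioi fun u hu => ?_
  have hu0 : (0:ℝ) < u := hu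
  rw [abs_of_nonneg (by positivity), smul_eq_mul]

lemma glasser_sum_int (hp : 0 < p) (hq : 0 < q) :
    IntegrableOn (fun u => (q + p / u ^ 2) * exp (-(q * u - p / u) ^ 2)) (Ioi (0:ℝ)) := by
  have key := (integrableOn_image_iff_integrableOn_abs_deriv_smul measurableSet_Ioi
    (phi_deriv p q hp hq) (phi_inj p q hp hq) (fun v => exp (-v ^ 2)))
  rw [phi_image p q hp hq] at key
  have : IntegrableOn (fun v : ℝ => exp (-v ^ 2)) univ := by
    rw [integrableOn_univ]
    simpa using integrable_exp_neg_mul_sq (by norm_num : (0:ℝ) < 1)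
  rw [key] at this
  refine this.congr_fun (fun u hu => ?_) measurableSet_Ioi
  have hu0 : (0:ℝ) < u := hu
  dsimp only
  rw [abs_of_nonneg (by positivity), smul_eq_mul]

lemma X_meas : Measurable (fun u : ℝ => exp (-(q * u - p / u) ^ 2)) := by
  fun_prop

lemma glasser_B_eq_A (hp : 0 < p) (hq : 0 < q) :
    ∫ u in Ioi (0:ℝ), exp (-(q * u - p / u) ^ 2)
      = ∫ u in Ioi (0:ℝ), (p / (q * u ^ 2)) * exp (-(q * u - p / u) ^ 2) := by
  rw [sub_div_aux (p / q) (by positivity) (fun u => exp (-(q * u - p / u) ^ 2))]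
  refine setIntegral_congr_fun measurableSet_Ioi fun u hu => ?_
  have hu0 : (0:ℝ) < u := hu
  have h1 : p / q / u = p / (q * u) := by field_simp
  have h2 : q * (p / (q * u)) - p / (p / (q * u)) = -(q * u - p / u) := by
    field_simp
    ring
  rw [h1, h2, neg_sq]
  congr 1
  field_simp

lemma glasser_X_int (hp : 0 < p) (hq : 0 < q) :
    IntegrableOn (fun u => exp (-(q * u - p / u) ^ 2)) (Ioi (0:ℝ)) := by
  refine ((glasser_sum_int p q hp hq).const_mul (1/q)).mono'
    ((X_meas p q).aestronglyMeasurable) ?_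
  filter_upwards [ae_restrict_mem measurableSet_Ioi] with u hu
  have hu0 : (0:ℝ) < u := hu
  rw [Real.norm_eq_abs, abs_of_nonneg (exp_nonneg _)]
  have h : exp (-(q * u - p / u) ^ 2) * q ≤ exp (-(q * u - p / u) ^ 2) * (q + p / u ^ 2) := by
    have := exp_nonneg (-(q * u - p / u) ^ 2)
    nlinarith [div_nonneg hp.le (sq_nonneg u)]
  calc exp (-(q * u - p / u) ^ 2)
      = (1/q) * (exp (-(q * u - p / u) ^ 2) * q) := by field_simp
    _ ≤ (1/q) * (exp (-(q * u - p / u) ^ 2) * (q + p / u ^ 2)) := by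
        apply mul_le_mul_of_nonneg_left h (by positivity)
    _ = 1 / q * ((q + p / u ^ 2) * exp (-(q * u - p / u) ^ 2)) := by ring

lemma glasser_B_int (hp : 0 < p) (hq : 0 < q) :
    IntegrableOn (fun u => (p / (q * u ^ 2)) * exp (-(q * u - p / u) ^ 2)) (Ioi (0:ℝ)) := by
  refine ((glasser_sum_int p q hp hq).const_mul (1/q)).mono'
    (Measurable.aestronglyMeasurable (by fun_prop)) ?_
  filter_upwards [ae_restrict_mem measurableSet_Ioi] with u hu
  have hu0 : (0:ℝ) < u := hu
  rw [Real.norm_eq_abs, abs_of_nonneg (by positivity)]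
  have h : p / (q * u ^ 2) ≤ (1/q) * (q + p / u ^ 2) := by
    have e : (1/q) * (q + p / u ^ 2) = 1 + p / (q * u ^ 2) := by
      field_simp
    rw [e]
    linarith
  calc (p / (q * u ^ 2)) * exp (-(q * u - p / u) ^ 2)
      ≤ ((1/q) * (q + p / u ^ 2)) * exp (-(q * u - p / u) ^ 2) :=
        mul_le_mul_of_nonneg_right h (exp_nonneg _)
    _ = 1 / q * ((q + p / u ^ 2) * exp (-(q * u - p / u) ^ 2)) := by ring

lemma glasser_A (hp : 0 < p) (hq : 0 < q) :
    ∫ u in Ioi (0:ℝ), exp (-(q * u - p / u) ^ 2) = Real.sqrt π / (2 * q) := by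
  have hsum := glasser_sum p q hp hq
  have hsplit : ∀ u ∈ Ioi (0:ℝ),
      (q + p / u ^ 2) * exp (-(q * u - p / u) ^ 2)
        = q * exp (-(q * u - p / u) ^ 2)
          + q * ((p / (q * u ^ 2)) * exp (-(q * u - p / u) ^ 2)) := by
    intro u hu
    have hu0 : (0:ℝ) < u := hu
    field_simp
  rw [setIntegral_congr_fun measurableSet_Ioi hsplit] at hsum
  rw [integral_add (((glasser_X_int p q hp hq).const_mul q))
    ((glasser_B_int p q hp hq).const_mul q), integral_const_mul, integral_const_mul,
    ← glasser_B_eq_A p q hp hq] at hsum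
  have : 2 * q * ∫ u in Ioi (0:ℝ), exp (-(q * u - p / u) ^ 2) = Real.sqrt π := by
    rw [← hsum]; ring
  field_simp at this ⊢
  linarith

end Glasser

lemma sq_image : (fun u : ℝ => u ^ 2) '' Ioi (0:ℝ) = Ioi 0 := by
  ext y
  constructor
  · rintro ⟨u, hu, rfl⟩; exact pow_pos (show (0:ℝ) < u from hu) 2
  · intro hy
    exact ⟨Real.sqrt y, Real.sqrt_pos.mpr hy, Real.sq_sqrt (le_of_lt hy)⟩

lemma subord_integrand_eq (t a : ℝ) (ht : 0 < t) (ha : 0 < a) : ∀ u ∈ Ioi (0:ℝ),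
    |2 * u| • ((u ^ 2) ^ (-(3:ℝ)/2) * (exp (-t ^ 2 / (4 * u ^ 2)) * exp (-a ^ 2 * u ^ 2)))
      = (2 * exp (-(t * a)) * a / (t / 2)) *
          ((t / 2) / (a * u ^ 2) * exp (-(a * u - (t / 2) / u) ^ 2)) := by
  intro u hu
  have hu0 : (0:ℝ) < u := hu
  have h1 : (u ^ 2 : ℝ) ^ (-(3:ℝ)/2) = (u ^ 3)⁻¹ := by
    rw [← rpow_natCast u 2, ← rpow_mul hu0.le,
      show ((2:ℕ):ℝ) * (-(3:ℝ)/2) = -((3:ℕ):ℝ) by norm_num, rpow_neg hu0.le, rpow_natCast]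
  have h2 : exp (-t ^ 2 / (4 * u ^ 2)) * exp (-a ^ 2 * u ^ 2)
      = exp (-(a * u - (t / 2) / u) ^ 2) * exp (-(t * a)) := by
    rw [← Real.exp_add, ← Real.exp_add]
    congr 1
    field_simp
    ring
  rw [abs_of_nonneg (by positivity), smul_eq_mul, h1, h2]
  field_simp

lemma subord_pos (t a : ℝ) (ht : 0 < t) (ha : 0 < a) :
    ∫ s in Ioi (0:ℝ), s ^ (-(3:ℝ)/2) * (exp (-t ^ 2 / (4 * s)) * exp (-a ^ 2 * s))
      = (2 * Real.sqrt π / t) * exp (-(t * a)) := by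
  have hderiv : ∀ u ∈ Ioi (0:ℝ), HasDerivWithinAt (fun u : ℝ => u ^ 2) (2 * u) (Ioi 0) u := by
    intro u hu
    simpa [mul_comm] using (hasDerivAt_pow 2 u).hasDerivWithinAt
  have hinj : InjOn (fun u : ℝ => u ^ 2) (Ioi 0) := by
    intro x hx y hy h
    exact pow_left_strictMonoOn₀ two_ne_zero |>.injOn (le_of_lt hx) (le_of_lt hy) h
  have key := integral_image_eq_integral_abs_deriv_smul measurableSet_Ioi hderiv hinj
    (fun s => s ^ (-(3:ℝ)/2) * (exp (-t ^ 2 / (4 * s)) * exp (-a ^ 2 * s)))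
  rw [sq_image] at key
  rw [key, setIntegral_congr_fun measurableSet_Ioi (subord_integrand_eq t a ht ha),
    integral_const_mul, ← glasser_B_eq_A (t/2) a (by positivity) ha,
    glasser_A (t/2) a (by positivity) ha]
  field_simp

lemma four_half (t : ℝ) (ht : 0 < t) : (t ^ 2 / 4) ^ ((1:ℝ)/2) = t / 2 := by
  rw [show t ^ 2 / 4 = (t/2) ^ 2 by ring, ← Real.rpow_natCast (t/2) 2, ← Real.rpow_mul (by positivity)]
  norm_num

lemma subord (t a : ℝ) (ht : 0 < t) (ha : 0 ≤ a) :
    ∫ s in Ioi (0:ℝ), s ^ (-(3:ℝ)/2) * (exp (-t ^ 2 / (4 * s)) * exp (-a ^ 2 * s))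
      = (2 * Real.sqrt π / t) * exp (-(t * a)) := by
  rcases eq_or_lt_of_le ha with rfl | ha'
  · have heq : ∀ s ∈ Ioi (0:ℝ),
        s ^ (-(3:ℝ)/2) * (exp (-t ^ 2 / (4 * s)) * exp (-(0:ℝ) ^ 2 * s))
          = s ^ (-((1:ℝ)/2) - 1) * exp (-(t ^ 2 / 4) / s) := by
      intro s hs
      have hs0 : (0:ℝ) < s := hs
      have e1 : -((1:ℝ)/2) - 1 = -(3:ℝ)/2 := by norm_num
      have e2 : -(t ^ 2 / 4) / s = -t ^ 2 / (4 * s) := by field_simp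
      rw [e1, e2]
      norm_num
    rw [setIntegral_congr_fun measurableSet_Ioi heq,
      gamma_type (1/2) (t ^ 2 / 4) (by norm_num) (by positivity),
      Real.Gamma_one_half_eq, four_half t ht]
    norm_num
    rw [div_div_eq_mul_div]
    ring
  · exact subord_pos t a ht ha'

lemma subord_int (t a : ℝ) (ht : 0 < t) (ha : 0 ≤ a) :
    IntegrableOn (fun s => s ^ (-(3:ℝ)/2) * (exp (-t ^ 2 / (4 * s)) * exp (-a ^ 2 * s)))
      (Ioi (0:ℝ)) := by
  have hint := gamma_type_int (1/2) (t ^ 2 / 4) (by norm_num) (by positivity)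
  refine hint.mono' (Measurable.aestronglyMeasurable (by fun_prop)) ?_
  filter_upwards [ae_restrict_mem measurableSet_Ioi] with s hs
  have hs0 : (0:ℝ) < s := hs
  rw [Real.norm_eq_abs, abs_of_nonneg (by positivity)]
  have h1 : exp (-a ^ 2 * s) ≤ 1 := by
    rw [← Real.exp_zero]
    apply Real.exp_le_exp.mpr
    nlinarith [sq_nonneg a]
  have h2 : -t ^ 2 / (4 * s) = -(t ^ 2 / 4) / s := by field_simp
  have h3 : -((1:ℝ)/2) - 1 = -(3:ℝ)/2 := by norm_num
  rw [← h3, h2]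
  calc s ^ (-((1:ℝ)/2) - 1) * (exp (-(t ^ 2 / 4) / s) * exp (-a ^ 2 * s))
      ≤ s ^ (-((1:ℝ)/2) - 1) * (exp (-(t ^ 2 / 4) / s) * 1) := by
        apply mul_le_mul_of_nonneg_left _ (by positivity)
        apply mul_le_mul_of_nonneg_left h1 (exp_nonneg _)
    _ = s ^ (-((1:ℝ)/2) - 1) * exp (-(t ^ 2 / 4) / s) := by ring

lemma const_id (d : ℕ) :
    (1 / (2 * Real.sqrt π)) * (4 * π) ^ (-(d:ℝ)/2) * 4 ^ (((d:ℝ)+1)/2)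
      = π ^ (-(((d:ℝ)+1)/2)) := by
  have hπ := Real.pi_pos
  have h4 : ∀ x : ℝ, (4:ℝ) ^ x = 2 ^ (2*x) := by
    intro x
    rw [show (4:ℝ) = (2:ℝ) ^ ((2:ℕ):ℝ) by rw [Real.rpow_natCast]; norm_num,
      ← Real.rpow_mul (by norm_num)]
    norm_num
  rw [mul_rpow (by norm_num : (0:ℝ) ≤ 4) hπ.le, h4, h4, Real.sqrt_eq_rpow]
  have e2 : (2:ℝ) ^ (2*(-(d:ℝ)/2)) * 2 ^ (2*(((d:ℝ)+1)/2)) = 2 := by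
    rw [← Real.rpow_add (by norm_num : (0:ℝ) < 2),
      show 2*(-(d:ℝ)/2) + 2*(((d:ℝ)+1)/2) = 1 by ring, Real.rpow_one]
  have eπ : π ^ ((1:ℝ)/2) * π ^ (-(((d:ℝ)+1)/2)) = π ^ (-(d:ℝ)/2) := by
    rw [← Real.rpow_add hπ]; congr 1; ring
  have hp1 : (0:ℝ) < π ^ ((1:ℝ)/2) := rpow_pos_of_pos hπ _
  rw [div_mul_eq_mul_div, div_mul_eq_mul_div, div_eq_iff (by positivity)]
  linear_combination (π ^ (-(d:ℝ)/2)) * e2 - 2 * eπ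

lemma kernel_rep (d : ℕ) (t r : ℝ) (ht : 0 < t) (hr : 0 ≤ r) :
    Real.Gamma (((d:ℝ)+1)/2) / π ^ (((d:ℝ)+1)/2) * (t / (t ^ 2 + r) ^ (((d:ℝ)+1)/2))
      = ∫ s in Ioi (0:ℝ), t / (2 * Real.sqrt π) * (s ^ (-(3:ℝ)/2) * exp (-t ^ 2 / (4 * s)))
          * ((4 * π * s) ^ (-(d:ℝ)/2) * exp (-r / (4 * s))) := by
  set ν := ((d:ℝ)+1)/2 with hν
  have hν0 : 0 < ν := by positivity
  have hc : 0 < (t ^ 2 + r) / 4 := by positivity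
  have heq : ∀ s ∈ Ioi (0:ℝ),
      t / (2 * Real.sqrt π) * (s ^ (-(3:ℝ)/2) * exp (-t ^ 2 / (4 * s)))
          * ((4 * π * s) ^ (-(d:ℝ)/2) * exp (-r / (4 * s)))
        = (t / (2 * Real.sqrt π) * (4 * π) ^ (-(d:ℝ)/2))
            * (s ^ (-ν - 1) * exp (-((t ^ 2 + r)/4) / s)) := by
    intro s hs
    have hs0 : (0:ℝ) < s := hs
    have h1 : (4 * π * s) ^ (-(d:ℝ)/2) = (4 * π) ^ (-(d:ℝ)/2) * s ^ (-(d:ℝ)/2) :=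
      mul_rpow (by positivity) hs0.le
    have h2 : s ^ (-(3:ℝ)/2) * s ^ (-(d:ℝ)/2) = s ^ (-ν - 1) := by
      rw [← Real.rpow_add hs0]; congr 1; rw [hν]; ring
    have h3 : exp (-t ^ 2 / (4 * s)) * exp (-r / (4 * s)) = exp (-((t ^ 2 + r)/4) / s) := by
      rw [← Real.exp_add]; congr 1; field_simp; ring
    rw [h1, ← h2, ← h3]; ring
  rw [setIntegral_congr_fun measurableSet_Ioi heq, integral_const_mul,
    gamma_type ν ((t ^ 2 + r)/4) hν0 hc]
  have h5 : ((t ^ 2 + r)/4) ^ ν = (t ^ 2 + r) ^ ν / 4 ^ ν :=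
    div_rpow (by positivity) (by norm_num : (0:ℝ) ≤ 4) ν
  have h6 := const_id d
  rw [← hν] at h6
  rw [Real.rpow_neg Real.pi_pos.le] at h6
  rw [h5, div_div_eq_mul_div]
  linear_combination (-(Real.Gamma ν * t / ((t ^ 2 + r) ^ ν))) * h6

lemma kernel_rep_int (d : ℕ) (t r : ℝ) (ht : 0 < t) (hr : 0 ≤ r) :
    IntegrableOn (fun s => t / (2 * Real.sqrt π) * (s ^ (-(3:ℝ)/2) * exp (-t ^ 2 / (4 * s)))
          * ((4 * π * s) ^ (-(d:ℝ)/2) * exp (-r / (4 * s)))) (Ioi (0:ℝ)) := by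
  set ν := ((d:ℝ)+1)/2 with hν
  have hν0 : 0 < ν := by positivity
  have hc : 0 < (t ^ 2 + r) / 4 := by positivity
  have hint := (gamma_type_int ν ((t ^ 2 + r)/4) hν0 hc).const_mul
    (t / (2 * Real.sqrt π) * (4 * π) ^ (-(d:ℝ)/2))
  refine IntegrableOn.congr_fun hint (fun s hs => ?_) measurableSet_Ioi
  have hs0 : (0:ℝ) < s := hs
  have h1 : (4 * π * s) ^ (-(d:ℝ)/2) = (4 * π) ^ (-(d:ℝ)/2) * s ^ (-(d:ℝ)/2) :=
    mul_rpow (by positivity) hs0.le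
  have h2 : s ^ (-(3:ℝ)/2) * s ^ (-(d:ℝ)/2) = s ^ (-ν - 1) := by
    rw [← Real.rpow_add hs0]; congr 1; rw [hν]; ring
  have h3 : exp (-t ^ 2 / (4 * s)) * exp (-r / (4 * s)) = exp (-((t ^ 2 + r)/4) / s) := by
    rw [← Real.exp_add]; congr 1; field_simp; ring
  rw [h1, ← h2, ← h3]; ring

/-- The Fourier transform of the `d`-dimensional Cauchy (Poisson) kernel equals
`e^{-t‖ξ‖}`. -/
theorem cauchy_kernel_fourier_transform (d : ℕ) (hd : 1 ≤ d) (t : ℝ)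
    (ht : 0 < t) (ξ : EuclideanSpace ℝ (Fin d)) :
    ∫ x : EuclideanSpace ℝ (Fin d),
        Complex.exp (Complex.I * ((inner ℝ ξ x : ℝ) : ℂ)) *
          ((Real.Gamma (((d : ℝ) + 1) / 2) / Real.pi ^ (((d : ℝ) + 1) / 2) *
            (t / (t ^ 2 + ‖x‖ ^ 2) ^ (((d : ℝ) + 1) / 2)) : ℝ) : ℂ) =
      Complex.exp (-(t * ‖ξ‖) : ℝ) := by
  have hsπ : (0:ℝ) < Real.sqrt π := Real.sqrt_pos.mpr pi_pos
  -- Step 1: subordination representation of the kernel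
  have step1 : ∀ x : EuclideanSpace ℝ (Fin d),
      Complex.exp (Complex.I * ((inner ℝ ξ x : ℝ) : ℂ)) *
          ((Real.Gamma (((d : ℝ) + 1) / 2) / Real.pi ^ (((d : ℝ) + 1) / 2) *
            (t / (t ^ 2 + ‖x‖ ^ 2) ^ (((d : ℝ) + 1) / 2)) : ℝ) : ℂ)
        = ∫ s in Ioi (0:ℝ), Complex.exp (Complex.I * ((inner ℝ ξ x : ℝ) : ℂ)) *
            ((t / (2 * Real.sqrt π) * (s ^ (-(3:ℝ)/2) * exp (-t ^ 2 / (4 * s)))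
              * ((4 * π * s) ^ (-(d:ℝ)/2) * exp (-‖x‖ ^ 2 / (4 * s))) : ℝ) : ℂ) := by
    intro x
    rw [kernel_rep d t (‖x‖ ^ 2) ht (sq_nonneg _),
      show ((∫ s in Ioi (0:ℝ), t / (2 * Real.sqrt π) * (s ^ (-(3:ℝ)/2) * exp (-t ^ 2 / (4 * s)))
              * ((4 * π * s) ^ (-(d:ℝ)/2) * exp (-‖x‖ ^ 2 / (4 * s))) : ℝ) : ℂ)
        = ∫ s in Ioi (0:ℝ), ((t / (2 * Real.sqrt π) * (s ^ (-(3:ℝ)/2) * exp (-t ^ 2 / (4 * s)))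
              * ((4 * π * s) ^ (-(d:ℝ)/2) * exp (-‖x‖ ^ 2 / (4 * s))) : ℝ) : ℂ)
          from (integral_ofReal).symm,
      ← integral_const_mul]
  simp_rw [step1]
  -- pointwise Gaussian form
  have hpoint : ∀ s ∈ Ioi (0:ℝ), ∀ x : EuclideanSpace ℝ (Fin d),
      Complex.exp (Complex.I * ((inner ℝ ξ x : ℝ) : ℂ)) *
          ((t / (2 * Real.sqrt π) * (s ^ (-(3:ℝ)/2) * exp (-t ^ 2 / (4 * s)))
            * ((4 * π * s) ^ (-(d:ℝ)/2) * exp (-‖x‖ ^ 2 / (4 * s))) : ℝ) : ℂ)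
        = ((t / (2 * Real.sqrt π) * (s ^ (-(3:ℝ)/2) * exp (-t ^ 2 / (4 * s)))
            * (4 * π * s) ^ (-(d:ℝ)/2) : ℝ) : ℂ)
          * Complex.exp (-(((4*s)⁻¹ : ℝ) : ℂ) * (‖x‖:ℂ) ^ 2
              + Complex.I * ((inner ℝ ξ x : ℝ) : ℂ)) := by
    intro s hs x
    have hs0 : (0:ℝ) < s := hs
    rw [Complex.exp_add,
      show (-(((4*s)⁻¹ : ℝ) : ℂ) * (‖x‖:ℂ) ^ 2) = ((-‖x‖ ^ 2 / (4 * s) : ℝ) : ℂ) by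
        push_cast; field_simp,
      ← Complex.ofReal_exp]
    push_cast
    ring
  -- measurability
  have hmeas : AEStronglyMeasurable
      (Function.uncurry (fun (x : EuclideanSpace ℝ (Fin d)) (s : ℝ) =>
        Complex.exp (Complex.I * ((inner ℝ ξ x : ℝ) : ℂ)) *
          ((t / (2 * Real.sqrt π) * (s ^ (-(3:ℝ)/2) * exp (-t ^ 2 / (4 * s)))
            * ((4 * π * s) ^ (-(d:ℝ)/2) * exp (-‖x‖ ^ 2 / (4 * s))) : ℝ) : ℂ)))
      ((volume : Measure (EuclideanSpace ℝ (Fin d))).prod (volume.restrict (Ioi 0))) := by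
    have h1 : Measurable (fun p : (EuclideanSpace ℝ (Fin d)) × ℝ => (inner ℝ ξ p.1 : ℝ)) :=
      (continuous_const.inner continuous_fst).measurable
    exact ((Complex.measurable_exp.comp
      ((Complex.measurable_ofReal.comp h1).const_mul _)).mul
        (Complex.measurable_ofReal.comp (by fun_prop))).aestronglyMeasurable
  -- slice integrability
  have hslice : ∀ s ∈ Ioi (0:ℝ), Integrable (fun x : EuclideanSpace ℝ (Fin d) =>
      Complex.exp (Complex.I * ((inner ℝ ξ x : ℝ) : ℂ)) *
        ((t / (2 * Real.sqrt π) * (s ^ (-(3:ℝ)/2) * exp (-t ^ 2 / (4 * s)))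
          * ((4 * π * s) ^ (-(d:ℝ)/2) * exp (-‖x‖ ^ 2 / (4 * s))) : ℝ) : ℂ)) := by
    intro s hs
    have hs0 : (0:ℝ) < s := hs
    have hb : 0 < ((((4*s)⁻¹ : ℝ) : ℂ)).re := by
      rw [Complex.ofReal_re]; positivity
    have := (GaussianFourier.integrable_cexp_neg_mul_sq_norm_add
      (V := EuclideanSpace ℝ (Fin d)) hb Complex.I ξ).const_mul
      ((t / (2 * Real.sqrt π) * (s ^ (-(3:ℝ)/2) * exp (-t ^ 2 / (4 * s)))
        * (4 * π * s) ^ (-(d:ℝ)/2) : ℝ) : ℂ)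
    exact this.congr (Filter.Eventually.of_forall fun x => (hpoint s hs x).symm)
  -- value of the inner (Gaussian) integral
  have hinner : ∀ s ∈ Ioi (0:ℝ),
      (∫ x : EuclideanSpace ℝ (Fin d),
        Complex.exp (Complex.I * ((inner ℝ ξ x : ℝ) : ℂ)) *
          ((t / (2 * Real.sqrt π) * (s ^ (-(3:ℝ)/2) * exp (-t ^ 2 / (4 * s)))
            * ((4 * π * s) ^ (-(d:ℝ)/2) * exp (-‖x‖ ^ 2 / (4 * s))) : ℝ) : ℂ))
        = ((t / (2 * Real.sqrt π) * (s ^ (-(3:ℝ)/2) * (exp (-t ^ 2 / (4 * s))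
            * exp (-‖ξ‖ ^ 2 * s))) : ℝ) : ℂ) := by
    intro s hs
    have hs0 : (0:ℝ) < s := hs
    have hb : 0 < ((((4*s)⁻¹ : ℝ) : ℂ)).re := by
      rw [Complex.ofReal_re]; positivity
    rw [integral_congr_ae (Filter.Eventually.of_forall (hpoint s hs)), integral_const_mul,
      GaussianFourier.integral_cexp_neg_mul_sq_norm_add hb Complex.I ξ,
      finrank_euclideanSpace_fin]
    have hb4 : (π : ℂ) / (((4*s)⁻¹ : ℝ) : ℂ) = ((4*π*s : ℝ) : ℂ) := by
      push_cast; field_simp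
    have hexp : Complex.I ^ 2 * (‖ξ‖:ℂ) ^ 2 / (4 * (((4*s)⁻¹ : ℝ) : ℂ))
        = ((-‖ξ‖ ^ 2 * s : ℝ) : ℂ) := by
      rw [Complex.I_sq]; push_cast; field_simp
    have hcast : (((d:ℝ)/2 : ℝ) : ℂ) = ((d:ℕ) : ℂ) / 2 := by push_cast; ring
    rw [hb4, hexp, ← hcast, ← Complex.ofReal_cpow (by positivity) ((d:ℝ)/2),
      ← Complex.ofReal_exp, ← Complex.ofReal_mul, ← Complex.ofReal_mul]
    rw [Complex.ofReal_inj]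
    have hone : (4*π*s) ^ (-(d:ℝ)/2) * (4*π*s) ^ ((d:ℝ)/2) = 1 := by
      rw [← Real.rpow_add (by positivity), show -(d:ℝ)/2 + (d:ℝ)/2 = 0 by ring, Real.rpow_zero]
    linear_combination (t / (2 * Real.sqrt π) * (s ^ (-(3:ℝ)/2) * exp (-t ^ 2 / (4 * s)))
      * exp (-‖ξ‖ ^ 2 * s)) * hone
  -- value of the norm integral
  have hnorm : ∀ s ∈ Ioi (0:ℝ),
      (∫ x : EuclideanSpace ℝ (Fin d), ‖Complex.exp (Complex.I * ((inner ℝ ξ x : ℝ) : ℂ)) *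
          ((t / (2 * Real.sqrt π) * (s ^ (-(3:ℝ)/2) * exp (-t ^ 2 / (4 * s)))
            * ((4 * π * s) ^ (-(d:ℝ)/2) * exp (-‖x‖ ^ 2 / (4 * s))) : ℝ) : ℂ)‖)
        = t / (2 * Real.sqrt π) * (s ^ (-(3:ℝ)/2) * exp (-t ^ 2 / (4 * s))) := by
    intro s hs
    have hs0 : (0:ℝ) < s := hs
    have h1 : ∀ x : EuclideanSpace ℝ (Fin d),
        ‖Complex.exp (Complex.I * ((inner ℝ ξ x : ℝ) : ℂ)) *
          ((t / (2 * Real.sqrt π) * (s ^ (-(3:ℝ)/2) * exp (-t ^ 2 / (4 * s)))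
            * ((4 * π * s) ^ (-(d:ℝ)/2) * exp (-‖x‖ ^ 2 / (4 * s))) : ℝ) : ℂ)‖
        = (t / (2 * Real.sqrt π) * (s ^ (-(3:ℝ)/2) * exp (-t ^ 2 / (4 * s)))
            * (4 * π * s) ^ (-(d:ℝ)/2)) * exp (-(4*s)⁻¹ * ‖x‖ ^ 2) := by
      intro x
      rw [norm_mul]
      have h2 : ‖Complex.exp (Complex.I * ((inner ℝ ξ x : ℝ) : ℂ))‖ = 1 := by
        rw [Complex.norm_exp]
        simp
      rw [h2, one_mul, Complex.norm_real, Real.norm_eq_abs, abs_of_nonneg (by positivity),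
        show -(4*s)⁻¹ * ‖x‖ ^ 2 = -‖x‖ ^ 2 / (4 * s) by field_simp]
      ring
    rw [integral_congr_ae (Filter.Eventually.of_forall h1), integral_const_mul,
      GaussianFourier.integral_rexp_neg_mul_sq_norm (show (0:ℝ) < (4*s)⁻¹ by positivity),
      finrank_euclideanSpace_fin,
      show π / (4*s)⁻¹ = 4*π*s by field_simp]
    have hone : (4*π*s) ^ (-(d:ℝ)/2) * (4*π*s) ^ ((d:ℝ)/2) = 1 := by
      rw [← Real.rpow_add (by positivity), show -(d:ℝ)/2 + (d:ℝ)/2 = 0 by ring, Real.rpow_zero]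
    linear_combination (t / (2 * Real.sqrt π) * (s ^ (-(3:ℝ)/2) * exp (-t ^ 2 / (4 * s)))) * hone
  -- product integrability and Fubini
  have hInt : Integrable (Function.uncurry (fun (x : EuclideanSpace ℝ (Fin d)) (s : ℝ) =>
      Complex.exp (Complex.I * ((inner ℝ ξ x : ℝ) : ℂ)) *
        ((t / (2 * Real.sqrt π) * (s ^ (-(3:ℝ)/2) * exp (-t ^ 2 / (4 * s)))
          * ((4 * π * s) ^ (-(d:ℝ)/2) * exp (-‖x‖ ^ 2 / (4 * s))) : ℝ) : ℂ)))
      ((volume : Measure (EuclideanSpace ℝ (Fin d))).prod (volume.restrict (Ioi 0))) := by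
    rw [integrable_prod_iff' hmeas]
    constructor
    · filter_upwards [ae_restrict_mem measurableSet_Ioi] with s hs
      exact hslice s hs
    · have hint := (gamma_type_int (1/2) (t ^ 2 / 4) (by norm_num) (by positivity)).const_mul
        (t / (2 * Real.sqrt π))
      refine hint.congr ?_
      filter_upwards [ae_restrict_mem measurableSet_Ioi] with s hs
      have hs0 : (0:ℝ) < s := hs
      simp only [Function.uncurry_apply_pair]
      rw [hnorm s hs, show (-((1:ℝ)/2) - 1 : ℝ) = -(3:ℝ)/2 by norm_num,
        show -(t ^ 2 / 4) / s = -t ^ 2 / (4 * s) by field_simp]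
  have swap := integral_integral_swap hInt
  rw [swap]
  beta_reduce
  rw [setIntegral_congr_fun measurableSet_Ioi hinner,
    show (∫ s in Ioi (0:ℝ), ((t / (2 * Real.sqrt π) * (s ^ (-(3:ℝ)/2) * (exp (-t ^ 2 / (4 * s))
            * exp (-‖ξ‖ ^ 2 * s))) : ℝ) : ℂ))
      = ((∫ s in Ioi (0:ℝ), t / (2 * Real.sqrt π) * (s ^ (-(3:ℝ)/2) * (exp (-t ^ 2 / (4 * s))
            * exp (-‖ξ‖ ^ 2 * s))) : ℝ) : ℂ) from integral_ofReal,
    integral_const_mul, subord t ‖ξ‖ ht (norm_nonneg ξ), ← Complex.ofReal_exp,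
    Complex.ofReal_inj]
  field_simp
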